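/- If a, b, c, d are integers satisfying a² + b² + c² = 3d², then the equation 2(a² + b²) = s² + 3r² has a solution in integers r, s. -/

import Mathlib

lemma sq_neg_three_of_mod (p : ℕ) (hp : p.Prime) (h3 : p % 3 = 1) :
    IsSquare (-3 : ZMod p) := by
  haveI : Fact p.Prime := ⟨hp⟩
  haveI : Fact (Nat.Prime 3) := ⟨by norm_num⟩
  have hdvd : 3 ∣ Fintype.card (ZMod p)ˣ := by
    rw [ZMod.card_units]
    have := hp.two_le
    omega
  obtain ⟨ζ, hζ⟩ := exists_prime_orderOf_dvd_card 3 hdvd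
  set z : ZMod p := (ζ : ZMod p) with hzdef
  have hz3 : z ^ 3 = 1 := by
    have h1 := pow_orderOf_eq_one ζ
    rw [hζ] at h1
    rw [hzdef, ← Units.val_pow_eq_pow_val, h1, Units.val_one]
  have hz1 : z ≠ 1 := by
    intro hz
    have : ζ = 1 := Units.ext hz
    rw [this, orderOf_one] at hζ; norm_num at hζ
  have hquad : z^2 + z + 1 = 0 := by
    have h0 : (z - 1) * (z^2 + z + 1) = 0 := by linear_combination hz3
    rcases mul_eq_zero.mp h0 with h' | h'
    · exact absurd (by linear_combination h' : z = 1) hz1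
    · exact h'
  exact ⟨2*z+1, by linear_combination (-4 : ZMod p)*hquad⟩

lemma mod_of_sq_neg_three (p : ℕ) (hp : p.Prime) (hp2 : p ≠ 2) (hp3 : p ≠ 3)
    (h : IsSquare (-3 : ZMod p)) : p % 3 = 1 := by
  haveI : Fact p.Prime := ⟨hp⟩
  obtain ⟨s, hs⟩ := h
  have h2 : (2 : ZMod p) ≠ 0 := by
    intro h0
    have h2' := (ZMod.natCast_eq_zero_iff 2 p).mp (by exact_mod_cast h0)
    exact hp2 ((Nat.prime_dvd_prime_iff_eq hp Nat.prime_two).mp h2')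
  have h3ne : (3 : ZMod p) ≠ 0 := by
    intro h0
    have h3' := (ZMod.natCast_eq_zero_iff 3 p).mp (by exact_mod_cast h0)
    exact hp3 ((Nat.prime_dvd_prime_iff_eq hp Nat.prime_three).mp h3')
  obtain ⟨w, hw⟩ : ∃ w : ZMod p, 2 * w = 1 := ⟨(2:ZMod p)⁻¹, mul_inv_cancel₀ h2⟩
  set z : ZMod p := (s - 1) * w with hzdef
  have hquad : z^2 + z + 1 = 0 := by
    rw [hzdef]
    linear_combination ((-(s+1))*w - 1) * hw - w^2 * hs
  have hz3 : z^3 = 1 := by linear_combination (z - 1) * hquad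
  have hz1 : z ≠ 1 := by
    intro h0
    rw [h0] at hquad
    exact h3ne (by linear_combination hquad)
  have hzu : z * z^2 = 1 := by linear_combination hz3
  have hu := IsUnit.of_mul_eq_one (a := z) (z^2) hzu
  have horder : orderOf hu.unit = 3 := by
    have hpow : hu.unit ^ 3 = 1 := by
      apply Units.ext
      rw [Units.val_pow_eq_pow_val, IsUnit.unit_spec, hz3, Units.val_one]
    have hd : orderOf hu.unit ∣ 3 := orderOf_dvd_of_pow_eq_one hpow
    rcases (Nat.prime_three).eq_one_or_self_of_dvd _ hd with h' | h'
    · exfalso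
      have h1 := orderOf_eq_one_iff.mp h'
      apply hz1
      have h1' : (hu.unit : ZMod p) = 1 := by rw [h1]; rfl
      rwa [IsUnit.unit_spec] at h1'
    · exact h'
  have hcard : 3 ∣ Fintype.card (ZMod p)ˣ := horder ▸ orderOf_dvd_card
  rw [ZMod.card_units] at hcard
  have := hp.two_le
  omega


lemma isSquare_neg_one_of_odd_val (p : ℕ) (hp : p.Prime) :
    ∀ n : ℕ, ∀ x y : ℤ, x^2 + y^2 = (n:ℤ) → 0 < n → Odd (n.factorization p) →
    IsSquare (-1 : ZMod p) := by
  haveI : Fact p.Prime := ⟨hp⟩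
  intro n
  induction n using Nat.strong_induction_on with
  | _ n ih =>
  intro x y hxy hn hodd
  have hpn : p ∣ n := Nat.dvd_of_factorization_pos (by rcases hodd with ⟨t, ht⟩; omega)
  have hpnz : (p:ℤ) ∣ (n:ℤ) := Int.natCast_dvd_natCast.mpr hpn
  have hpint : Prime (p:ℤ) := Nat.prime_iff_prime_int.mp hp
  by_cases hx : (p:ℤ) ∣ x
  · have hy : (p:ℤ) ∣ y := by
      have h1 : (p:ℤ) ∣ y^2 := by
        have : y^2 = (n:ℤ) - x^2 := by linarith
        rw [this]
        exact dvd_sub hpnz (dvd_pow hx two_ne_zero)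
      exact hpint.dvd_of_dvd_pow h1
    obtain ⟨x', hx'⟩ := hx
    obtain ⟨y', hy'⟩ := hy
    have hp2n : (p:ℕ)^2 ∣ n := by
      have : ((p:ℤ))^2 ∣ (n:ℤ) := by
        refine ⟨x'^2 + y'^2, ?_⟩
        rw [← hxy, hx', hy']; ring
      exact_mod_cast Int.natCast_dvd_natCast.mp (by exact_mod_cast this)
    set m := n / p^2 with hmdef
    have hnm : n = p^2 * m := (Nat.mul_div_cancel' hp2n).symm
    have hm0 : 0 < m := by
      rcases Nat.eq_zero_or_pos m with h' | h'
      · rw [h', mul_zero] at hnm; omega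
      · exact h'
    have hmeq : x'^2 + y'^2 = (m:ℤ) := by
      have hcast : (n:ℤ) = (p:ℤ)^2 * (m:ℤ) := by exact_mod_cast congrArg (Nat.cast : ℕ → ℤ) hnm
      have h2 : (p:ℤ)^2 * (x'^2 + y'^2) = (p:ℤ)^2 * (m:ℤ) := by
        rw [← hcast, ← hxy, hx', hy']; ring
      exact mul_left_cancel₀ (pow_ne_zero 2 (by exact_mod_cast hp.pos.ne')) h2
    have hfact : n.factorization p = 2 + m.factorization p := by
      rw [hnm, Nat.factorization_mul (pow_ne_zero 2 hp.pos.ne') hm0.ne', Finsupp.add_apply,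
        hp.factorization_pow, Finsupp.single_eq_same]
    have hmlt : m < n := by
      have h1 : 2 * m ≤ p ^ 2 * m := Nat.mul_le_mul_right m (by nlinarith [hp.two_le])
      have h2 : m < 2 * m := by omega
      exact hnm ▸ lt_of_lt_of_le h2 h1
    exact ih m hmlt x' y' hmeq hm0 (by rw [hfact] at hodd; rcases hodd with ⟨t, ht⟩; exact ⟨t - 1, by omega⟩)
  · have hxK : (x : ZMod p) ≠ 0 := fun h0 => hx ((ZMod.intCast_zmod_eq_zero_iff_dvd x p).mp h0)
    have h0 : (x:ZMod p)^2 + (y:ZMod p)^2 = 0 := by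
      have h1 : ((n:ℕ) : ZMod p) = 0 := (ZMod.natCast_eq_zero_iff n p).mpr hpn
      have h2 := congrArg (fun z : ℤ => (z : ZMod p)) hxy
      push_cast at h2
      rw [h2]; exact h1
    obtain ⟨w, hw⟩ : ∃ w : ZMod p, (x:ZMod p) * w = 1 := ⟨(x:ZMod p)⁻¹, mul_inv_cancel₀ hxK⟩
    exact ⟨(y:ZMod p) * w, by linear_combination ((x:ZMod p)*w+1)*hw - w^2*h0⟩

lemma isSquare_three_of_odd_val (p : ℕ) (hp : p.Prime) (hp3 : p ≠ 3) :
    ∀ n : ℕ, ∀ c d : ℤ, 3*d^2 - c^2 = (n:ℤ) → 0 < n → Odd (n.factorization p) →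
    IsSquare (3 : ZMod p) := by
  haveI : Fact p.Prime := ⟨hp⟩
  intro n
  induction n using Nat.strong_induction_on with
  | _ n ih =>
  intro c d hcd hn hodd
  have hpn : p ∣ n := Nat.dvd_of_factorization_pos (by rcases hodd with ⟨t, ht⟩; omega)
  have hpnz : (p:ℤ) ∣ (n:ℤ) := Int.natCast_dvd_natCast.mpr hpn
  have hpint : Prime (p:ℤ) := Nat.prime_iff_prime_int.mp hp
  by_cases hd : (p:ℤ) ∣ d
  · have hc : (p:ℤ) ∣ c := by
      have h1 : (p:ℤ) ∣ c^2 := by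
        have : c^2 = 3*d^2 - (n:ℤ) := by linarith
        rw [this]
        exact dvd_sub (Dvd.dvd.mul_left (dvd_pow hd two_ne_zero) 3) hpnz
      exact hpint.dvd_of_dvd_pow h1
    obtain ⟨c', hc'⟩ := hc
    obtain ⟨d', hd'⟩ := hd
    have hp2n : (p:ℕ)^2 ∣ n := by
      have : ((p:ℤ))^2 ∣ (n:ℤ) := by
        refine ⟨3*d'^2 - c'^2, ?_⟩
        rw [← hcd, hc', hd']; ring
      exact_mod_cast Int.natCast_dvd_natCast.mp (by exact_mod_cast this)
    set m := n / p^2 with hmdef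
    have hnm : n = p^2 * m := (Nat.mul_div_cancel' hp2n).symm
    have hm0 : 0 < m := by
      rcases Nat.eq_zero_or_pos m with h' | h'
      · rw [h', mul_zero] at hnm; omega
      · exact h'
    have hmeq : 3*d'^2 - c'^2 = (m:ℤ) := by
      have hcast : (n:ℤ) = (p:ℤ)^2 * (m:ℤ) := by exact_mod_cast congrArg (Nat.cast : ℕ → ℤ) hnm
      have h2 : (p:ℤ)^2 * (3*d'^2 - c'^2) = (p:ℤ)^2 * (m:ℤ) := by
        rw [← hcast, ← hcd, hc', hd']; ring
      exact mul_left_cancel₀ (pow_ne_zero 2 (by exact_mod_cast hp.pos.ne')) h2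
    have hfact : n.factorization p = 2 + m.factorization p := by
      rw [hnm, Nat.factorization_mul (pow_ne_zero 2 hp.pos.ne') hm0.ne', Finsupp.add_apply,
        hp.factorization_pow, Finsupp.single_eq_same]
    have hmlt : m < n := by
      have h1 : 2 * m ≤ p ^ 2 * m := Nat.mul_le_mul_right m (by nlinarith [hp.two_le])
      have h2 : m < 2 * m := by omega
      exact hnm ▸ lt_of_lt_of_le h2 h1
    exact ih m hmlt c' d' hmeq hm0 (by rw [hfact] at hodd; rcases hodd with ⟨t, ht⟩; exact ⟨t - 1, by omega⟩)
  · have hdK : (d : ZMod p) ≠ 0 := fun h0 => hd ((ZMod.intCast_zmod_eq_zero_iff_dvd d p).mp h0)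
    have h0 : 3*(d:ZMod p)^2 - (c:ZMod p)^2 = 0 := by
      have h1 : ((n:ℕ) : ZMod p) = 0 := (ZMod.natCast_eq_zero_iff n p).mpr hpn
      have h2 := congrArg (fun z : ℤ => (z : ZMod p)) hcd
      push_cast at h2
      rw [h2]; exact h1
    obtain ⟨w, hw⟩ : ∃ w : ZMod p, (d:ZMod p) * w = 1 := ⟨(d:ZMod p)⁻¹, mul_inv_cancel₀ hdK⟩
    exact ⟨(c:ZMod p) * w, by linear_combination (-3*((d:ZMod p)*w+1))*hw + w^2*h0⟩


lemma descent_step (p : ℕ) (hp : p.Prime) (hp2 : 2 < p) :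
    ∀ k : ℕ, 0 < k → k < p → ∀ x y : ℤ, x^2 + 3*y^2 = (k:ℤ) * p →
    ∃ u v : ℤ, (p:ℤ) = u^2 + 3*v^2 := by
  intro k
  induction k using Nat.strong_induction_on with
  | _ k ih =>
  intro hk0 hkp x y hxy
  rcases eq_or_lt_of_le (Nat.succ_le_of_lt hk0) with hk1 | hk2
  · have hk1' : (k:ℤ) = 1 := by exact_mod_cast hk1.symm
    rw [hk1', one_mul] at hxy
    exact ⟨x, y, hxy.symm⟩
  by_cases hke : 2 ∣ k
  · -- even k
    obtain ⟨k₁, hk₁⟩ := hke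
    have hkz : (k:ℤ) = 2 * (k₁:ℤ) := by exact_mod_cast hk₁
    obtain ⟨x₀, y₀, hXY⟩ : ∃ X Y : ℤ, (2*X)^2 + 3*(2*Y)^2 = (k:ℤ) * p := by
      rcases Int.even_or_odd x with hx | hx <;> rcases Int.even_or_odd y with hy | hy
      · obtain ⟨i, hi⟩ := hx; obtain ⟨j, hj⟩ := hy
        exact ⟨i, j, by rw [← hxy, hi, hj]; ring⟩
      · exfalso
        obtain ⟨i, hi⟩ := hx; obtain ⟨j, hj⟩ := hy
        rw [hi, hj, hkz] at hxy
        have h2 : 2 * ((k₁:ℤ) * (p:ℤ)) = 4 * (i*i) + 12 * (j*j) + 12 * j + 3 := by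
          linear_combination -hxy
        set A := i*i; set B := j*j; set C := (k₁:ℤ) * (p:ℤ)
        omega
      · exfalso
        obtain ⟨i, hi⟩ := hx; obtain ⟨j, hj⟩ := hy
        rw [hi, hj, hkz] at hxy
        have h2 : 2 * ((k₁:ℤ) * (p:ℤ)) = 4 * (i*i) + 4 * i + 12 * (j*j) + 1 := by
          linear_combination -hxy
        set A := i*i; set B := j*j; set C := (k₁:ℤ) * (p:ℤ)
        omega
      · obtain ⟨i, hi⟩ := hx; obtain ⟨j, hj⟩ := hy
        rw [hi, hj] at hxy
        rcases Int.even_or_odd (i - j) with hij | hij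
        · obtain ⟨t, ht⟩ := hij
          have hieq : i = j + 2*t := by omega
          rw [hieq] at hxy
          exact ⟨t + 2*j + 1, t, by linear_combination hxy⟩
        · obtain ⟨t, ht⟩ := hij
          have hieq : i = j + 2*t + 1 := by omega
          rw [hieq] at hxy
          exact ⟨t - j, t + j + 1, by linear_combination hxy⟩
    -- now 4(x₀²+3y₀²) = k p, k = 2 k₁
    have h2k : 2 * (x₀^2 + 3*y₀^2) = (k₁:ℤ) * p := by
      have hh := hXY
      rw [hkz] at hh
      have h4 : (2:ℤ) * (2 * (x₀^2 + 3*y₀^2)) = 2 * ((k₁:ℤ) * p) := by linear_combination hh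
      exact mul_left_cancel₀ two_ne_zero h4
    have hdvd2 : (2:ℤ) ∣ (k₁:ℤ) * (p:ℤ) := ⟨x₀^2 + 3*y₀^2, h2k.symm⟩
    have h2k₁ : (2:ℤ) ∣ (k₁:ℤ) := by
      rcases (Int.prime_two.dvd_mul.mp hdvd2) with h' | h'
      · exact h'
      · exfalso
        have : (2:ℕ) ∣ p := by exact_mod_cast h'
        rcases (Nat.prime_dvd_prime_iff_eq Nat.prime_two hp).mp this with h''
        omega
    have h2k₁' : 2 ∣ k₁ := by exact_mod_cast h2k₁
    obtain ⟨k₂, hk₂⟩ := h2k₁'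
    have hk₂z : (k₁:ℤ) = 2 * (k₂:ℤ) := by exact_mod_cast hk₂
    have hfin : x₀^2 + 3*y₀^2 = (k₂:ℤ) * p := by
      have h4 : 2 * (x₀^2 + 3*y₀^2) = 2 * ((k₂:ℤ) * p) := by
        rw [h2k, hk₂z]; ring
      exact mul_left_cancel₀ two_ne_zero h4
    have hk4 : k = 4 * k₂ := by omega
    exact ih k₂ (by omega) (by omega) (by omega) x₀ y₀ hfin
  · -- odd k, 1 < k
    have hkodd : k % 2 = 1 := Nat.odd_iff.mp (Nat.odd_iff.mpr (by omega))
    set x' := Int.bmod x k with hx'def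
    set y' := Int.bmod y k with hy'def
    have hkpos : (0:ℤ) < (k:ℤ) := by exact_mod_cast hk0
    -- bounds
    have hK2 : 2 * (((k:ℤ) - 1) / 2) = (k:ℤ) - 1 := by omega
    set K2 : ℤ := ((k:ℤ) - 1) / 2 with hK2def
    have hxub : x' ≤ K2 := Int.bmod_le hk0
    have hxlb : -K2 ≤ x' := by
      have h1 := Int.le_bmod (x := x) hk0
      have h2 : ((k:ℤ))/2 = K2 := by omega
      rw [h2] at h1
      omega
    have hyub : y' ≤ K2 := Int.bmod_le hk0
    have hylb : -K2 ≤ y' := by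
      have h1 := Int.le_bmod (x := y) hk0
      have h2 : ((k:ℤ))/2 = K2 := by omega
      rw [h2] at h1
      omega
    have hx'sq : x'^2 ≤ K2^2 := sq_le_sq' hxlb hxub
    have hy'sq : y'^2 ≤ K2^2 := sq_le_sq' hylb hyub
    have hTub : x'^2 + 3*y'^2 ≤ ((k:ℤ) - 1)^2 := by nlinarith [hK2]
    -- congruences
    have hxx : x' ≡ x [ZMOD (k:ℤ)] := Int.bmod_emod
    have hyy : y' ≡ y [ZMOD (k:ℤ)] := Int.bmod_emod
    have hTcong : x'^2 + 3*y'^2 ≡ x^2 + 3*y^2 [ZMOD (k:ℤ)] :=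
      (hxx.pow 2).add ((hyy.pow 2).mul_left 3)
    have hdvdT : (k:ℤ) ∣ x'^2 + 3*y'^2 := by
      have h1 : (k:ℤ) ∣ (x^2 + 3*y^2) - (x'^2 + 3*y'^2) := Int.ModEq.dvd hTcong
      have h2 : (k:ℤ) ∣ x^2 + 3*y^2 := by rw [hxy]; exact ⟨(p:ℤ), rfl⟩
      have h3 : x'^2 + 3*y'^2 = (x^2 + 3*y^2) - ((x^2 + 3*y^2) - (x'^2 + 3*y'^2)) := by ring
      rw [h3]; exact dvd_sub h2 h1
    obtain ⟨t, hT⟩ := hdvdT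
    have ht0 : 0 ≤ t := by nlinarith [sq_nonneg x', sq_nonneg y']
    rcases eq_or_lt_of_le ht0 with ht0' | htpos
    · -- t = 0: contradiction
      exfalso
      have hT0 : x'^2 + 3*y'^2 = 0 := by rw [hT, ← ht0']; ring
      have hx'sq0 : x' ^ 2 = 0 := le_antisymm (by nlinarith [sq_nonneg y']) (sq_nonneg x')
      have hy'sq0 : y' ^ 2 = 0 := le_antisymm (by nlinarith [sq_nonneg x']) (sq_nonneg y')
      have hx'0 : x' = 0 := pow_eq_zero_iff two_ne_zero |>.mp hx'sq0
      have hy'0 : y' = 0 := pow_eq_zero_iff two_ne_zero |>.mp hy'sq0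
      have hdx : (k:ℤ) ∣ x := by
        have := hxx
        rw [hx'0] at this
        exact (Int.modEq_zero_iff_dvd).mp this.symm
      have hdy : (k:ℤ) ∣ y := by
        have := hyy
        rw [hy'0] at this
        exact (Int.modEq_zero_iff_dvd).mp this.symm
      obtain ⟨x₁, hx₁⟩ := hdx
      obtain ⟨y₁, hy₁⟩ := hdy
      have hkp' : (k:ℤ) * ((k:ℤ) * (x₁^2 + 3*y₁^2)) = (k:ℤ) * p := by
        rw [← hxy, hx₁, hy₁]; ring
      have hdp : (k:ℤ) ∣ (p:ℤ) :=
        ⟨x₁^2 + 3*y₁^2, (mul_left_cancel₀ (by omega : (k:ℤ) ≠ 0) hkp').symm⟩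
      have hdpn : k ∣ p := by exact_mod_cast hdp
      rcases hp.eq_one_or_self_of_dvd k hdpn with h' | h' <;> omega
    · -- 0 < t
      have htk : t < k := by
        have h1 : (k:ℤ) * t ≤ ((k:ℤ) - 1)^2 := by rw [← hT]; exact hTub
        nlinarith
      have hdU : (k:ℤ) ∣ x*x' + 3*(y*y') := by
        have hc : x*x' + 3*(y*y') ≡ x*x + 3*(y*y) [ZMOD (k:ℤ)] :=
          (hxx.mul_left x).add ((hyy.mul_left y).mul_left 3)
        have h2 : (k:ℤ) ∣ x*x + 3*(y*y) := by
          have he : x*x + 3*(y*y) = x^2 + 3*y^2 := by ring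
          rw [he, hxy]; exact ⟨(p:ℤ), rfl⟩
        have h1 := Int.ModEq.dvd hc
        have h3 : x*x' + 3*(y*y') = (x*x + 3*(y*y)) - ((x*x + 3*(y*y)) - (x*x' + 3*(y*y'))) := by ring
        rw [h3]; exact dvd_sub h2 h1
      have hdV : (k:ℤ) ∣ x*y' - x'*y := by
        have hc : x*y' - x'*y ≡ x*y - x*y [ZMOD (k:ℤ)] :=
          (hyy.mul_left x).sub (hxx.mul_right y)
        have h1 := Int.ModEq.dvd hc
        have h3 : x*y' - x'*y = -((x*y - x*y) - (x*y' - x'*y)) + (x*y - x*y) := by ring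
        rw [h3]
        exact dvd_add (dvd_neg.mpr h1) (by simp)
      obtain ⟨U, hU⟩ := hdU
      obtain ⟨V, hV⟩ := hdV
      have hfin : U^2 + 3*V^2 = t * (p:ℤ) := by
        have hbig : ((k:ℤ)*U)^2 + 3*((k:ℤ)*V)^2 = ((k:ℤ)*p) * ((k:ℤ)*t) := by
          rw [← hU, ← hV, ← hxy, ← hT]; ring
        have h4 : (k:ℤ)^2 * (U^2 + 3*V^2) = (k:ℤ)^2 * (t * p) := by linear_combination hbig
        exact mul_left_cancel₀ (pow_ne_zero 2 (by omega : (k:ℤ) ≠ 0)) h4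
      set tn := t.toNat with htn
      have htcast : (tn:ℤ) = t := Int.toNat_of_nonneg ht0
      refine ih tn ?_ ?_ ?_ U V (by rw [htcast]; exact hfin)
      · omega
      · omega
      · omega

lemma prime_rep (p : ℕ) (hp : p.Prime) (h3 : p % 3 = 1) :
    ∃ u v : ℤ, (p:ℤ) = u^2 + 3*v^2 := by
  have hp2 : 2 < p := by
    have := hp.two_le
    omega
  obtain ⟨s, hs⟩ := sq_neg_three_of_mod p hp h3
  -- lift s to an integer t₀ with p ∣ t₀^2 + 3
  haveI : Fact p.Prime := ⟨hp⟩
  set t₀ : ℤ := (s.val : ℤ) with ht₀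
  have hcast : ((t₀ : ℤ) : ZMod p) = s := by
    rw [ht₀]
    push_cast
    rw [ZMod.natCast_val, ZMod.cast_id]
  have hdvd0 : (p:ℤ) ∣ t₀^2 + 3 := by
    rw [← ZMod.intCast_zmod_eq_zero_iff_dvd]
    push_cast
    rw [hcast]
    linear_combination -hs
  set t : ℤ := Int.bmod t₀ p with htdef
  have hdvd : (p:ℤ) ∣ t^2 + 3 := by
    have hcong : t ≡ t₀ [ZMOD (p:ℤ)] := Int.bmod_emod
    have h1 := Int.ModEq.dvd ((hcong.pow 2).add_right 3)
    have h2 : t^2 + 3 = (t₀^2 + 3) - ((t₀^2 + 3) - (t^2 + 3)) := by ring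
    rw [h2]; exact dvd_sub hdvd0 h1
  have hppos : 0 < p := hp.pos
  have hK2 : 2 * (((p:ℤ) - 1) / 2) = (p:ℤ) - 1 := by
    have : p % 2 = 1 := Nat.odd_iff.mp (hp.odd_of_ne_two (by omega))
    omega
  set K2 : ℤ := ((p:ℤ) - 1) / 2 with hK2def
  have htub : t ≤ K2 := Int.bmod_le hppos
  have htlb : -K2 ≤ t := by
    have h1 := Int.le_bmod (x := t₀) hppos
    have h2 : ((p:ℤ))/2 = K2 := by omega
    rw [h2] at h1
    exact h1
  have htsq : t^2 ≤ K2^2 := sq_le_sq' htlb htub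
  obtain ⟨k, hk⟩ := hdvd
  have hk0 : 0 < k := by nlinarith [sq_nonneg t]
  have hkp : k < p := by nlinarith [hK2]
  set kn := k.toNat with hkn
  have hkcast : (kn:ℤ) = k := Int.toNat_of_nonneg hk0.le
  refine descent_step p hp hp2 kn ?_ ?_ t 1 ?_
  · omega
  · omega
  · rw [hkcast]
    linear_combination hk


lemma rep_of_even_factorization :
    ∀ n : ℕ, 0 < n → (∀ q : ℕ, q.Prime → q % 3 = 2 → Even (n.factorization q)) →
    ∃ u v : ℤ, (n:ℤ) = u^2 + 3*v^2 := by
  intro n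
  induction n using Nat.strong_induction_on with
  | _ n ih =>
  intro hn hcond
  rcases eq_or_lt_of_le (Nat.succ_le_of_lt hn) with h1 | h1
  · exact ⟨1, 0, by rw [← h1]; norm_num⟩
  have hne1 : n ≠ 1 := by omega
  set p := n.minFac with hpdef
  have hp : p.Prime := Nat.minFac_prime hne1
  have hpd : p ∣ n := Nat.minFac_dvd n
  have hp3 : p % 3 = 0 ∨ p % 3 = 1 ∨ p % 3 = 2 := by omega
  rcases hp3 with h3 | h3 | h3
  · -- p = 3
    have hp3' : p = 3 := ((Nat.prime_dvd_prime_iff_eq (by norm_num) hp).mp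
      (Nat.dvd_of_mod_eq_zero h3)).symm
    rw [hp3'] at hpd
    set m := n / 3 with hm
    have hnm : n = 3 * m := (Nat.mul_div_cancel' hpd).symm
    have hm0 : 0 < m := by
      rcases Nat.eq_zero_or_pos m with h' | h'
      · rw [h', mul_zero] at hnm; omega
      · exact h'
    have hmn : m < n := by omega
    have hcond' : ∀ q : ℕ, q.Prime → q % 3 = 2 → Even (m.factorization q) := by
      intro q hq hq3
      have hq3ne : q ≠ 3 := by omega
      have := hcond q hq hq3
      rw [hnm, Nat.factorization_mul (by norm_num) hm0.ne', Finsupp.add_apply] at this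
      have h30 : (Nat.factorization 3) q = 0 := by
        apply Nat.factorization_eq_zero_of_not_dvd
        intro hqd
        exact hq3ne ((Nat.prime_dvd_prime_iff_eq hq (by norm_num)).mp hqd)
      simpa [h30] using this
    obtain ⟨u, v, huv⟩ := ih m hmn hm0 hcond'
    refine ⟨3*v, u, ?_⟩
    rw [hnm]
    push_cast
    linear_combination 3 * huv
  · -- p ≡ 1 mod 3
    obtain ⟨a, b, hab⟩ := prime_rep p hp h3
    set m := n / p with hm
    have hnm : n = p * m := (Nat.mul_div_cancel' hpd).symm
    have hm0 : 0 < m := by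
      rcases Nat.eq_zero_or_pos m with h' | h'
      · rw [h', mul_zero] at hnm; omega
      · exact h'
    have hmn : m < n := by
      have := hp.two_le
      calc m < 2 * m := by omega
      _ ≤ p * m := Nat.mul_le_mul_right m hp.two_le
      _ = n := hnm.symm
    have hcond' : ∀ q : ℕ, q.Prime → q % 3 = 2 → Even (m.factorization q) := by
      intro q hq hq3
      have hqp : q ≠ p := by omega
      have := hcond q hq hq3
      rw [hnm, Nat.factorization_mul (hp.pos.ne') hm0.ne', Finsupp.add_apply] at this
      have h30 : (Nat.factorization p) q = 0 := by
        apply Nat.factorization_eq_zero_of_not_dvd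
        intro hqd
        exact hqp ((Nat.prime_dvd_prime_iff_eq hq hp).mp hqd)
      simpa [h30] using this
    obtain ⟨u, v, huv⟩ := ih m hmn hm0 hcond'
    refine ⟨a*u - 3*b*v, a*v + b*u, ?_⟩
    rw [hnm]
    push_cast
    linear_combination ((m:ℕ):ℤ) * hab + ((a:ℤ)^2 + 3*b^2) * huv
  · -- p ≡ 2 mod 3
    have heven : Even (n.factorization p) := hcond p hp h3
    have hpos : 0 < n.factorization p := hp.factorization_pos_of_dvd (by omega) hpd
    have h2le : 2 ≤ n.factorization p := by
      rcases heven with ⟨r, hr⟩; omega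
    have hp2d : p^2 ∣ n := dvd_trans (pow_dvd_pow p h2le) (Nat.ordProj_dvd n p)
    set m := n / p^2 with hm
    have hnm : n = p^2 * m := (Nat.mul_div_cancel' hp2d).symm
    have hm0 : 0 < m := by
      rcases Nat.eq_zero_or_pos m with h' | h'
      · rw [h', mul_zero] at hnm; omega
      · exact h'
    have hmn : m < n := by
      have h4 : 4 ≤ p^2 := by nlinarith [hp.two_le]
      calc m < 2 * m := by omega
      _ ≤ p^2 * m := Nat.mul_le_mul_right m (by omega)
      _ = n := hnm.symm
    have hcond' : ∀ q : ℕ, q.Prime → q % 3 = 2 → Even (m.factorization q) := by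
      intro q hq hq3
      have := hcond q hq hq3
      rw [hnm, Nat.factorization_mul (pow_ne_zero 2 hp.pos.ne') hm0.ne',
        Finsupp.add_apply, hp.factorization_pow] at this
      by_cases hqp : q = p
      · rw [hqp, Finsupp.single_eq_same] at this
        rcases this with ⟨r, hr⟩
        rw [hqp]
        exact ⟨r - 1, by omega⟩
      · rw [Finsupp.single_eq_of_ne (fun hh => hqp hh)] at this
        simpa using this
    obtain ⟨u, v, huv⟩ := ih m hmn hm0 hcond'
    refine ⟨p*u, p*v, ?_⟩
    rw [hnm]
    push_cast
    linear_combination ((p:ℤ)^2) * huv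


lemma parity_abcd (a b c d : ℤ) (h : a^2 + b^2 + c^2 = 3*d^2) :
    ((2:ℤ) ∣ a ↔ (2:ℤ) ∣ d) ∧ ((2:ℤ) ∣ b ↔ (2:ℤ) ∣ d) ∧ ((2:ℤ) ∣ c ↔ (2:ℤ) ∣ d) := by
  have key : ∀ A B C D : ZMod 4, A^2 + B^2 + C^2 = 3*D^2 →
      (((ZMod.castHom (by norm_num : (2:ℕ) ∣ 4) (ZMod 2)) A = 0 ↔
        (ZMod.castHom (by norm_num : (2:ℕ) ∣ 4) (ZMod 2)) D = 0) ∧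
       ((ZMod.castHom (by norm_num : (2:ℕ) ∣ 4) (ZMod 2)) B = 0 ↔
        (ZMod.castHom (by norm_num : (2:ℕ) ∣ 4) (ZMod 2)) D = 0) ∧
       ((ZMod.castHom (by norm_num : (2:ℕ) ∣ 4) (ZMod 2)) C = 0 ↔
        (ZMod.castHom (by norm_num : (2:ℕ) ∣ 4) (ZMod 2)) D = 0)) := by decide
  have h4 : ((a:ZMod 4))^2 + ((b:ZMod 4))^2 + ((c:ZMod 4))^2 = 3*((d:ZMod 4))^2 := by
    have := congrArg (fun z : ℤ => (z : ZMod 4)) h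
    push_cast at this
    exact this
  obtain ⟨h1, h2, h3⟩ := key _ _ _ _ h4
  rw [map_intCast, map_intCast] at h1 h2 h3
  rw [ZMod.intCast_zmod_eq_zero_iff_dvd, ZMod.intCast_zmod_eq_zero_iff_dvd] at h1 h2 h3
  exact ⟨by exact_mod_cast h1, by exact_mod_cast h2, by exact_mod_cast h3⟩


theorem rs_solution (a b c d : ℤ) (h : a ^ 2 + b ^ 2 + c ^ 2 = 3 * d ^ 2) :
    ∃ r s : ℤ, 2 * (a ^ 2 + b ^ 2) = s ^ 2 + 3 * r ^ 2 := by
  suffices H : ∀ n : ℕ, ∀ a b c d : ℤ, (a^2 + b^2).natAbs = n →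
      a^2 + b^2 + c^2 = 3*d^2 → ∃ r s : ℤ, 2 * (a^2 + b^2) = s^2 + 3*r^2 by
    exact H _ a b c d rfl h
  intro n
  induction n using Nat.strong_induction_on with
  | _ n ih =>
  intro a b c d hn h
  by_cases h0 : a = 0 ∧ b = 0
  · exact ⟨0, 0, by rw [h0.1, h0.2]; ring⟩
  have hpos : 0 < a^2 + b^2 := by
    rcases not_and_or.mp h0 with h' | h'
    · have h1 : 0 < a^2 := (sq_nonneg a).lt_of_ne (Ne.symm (pow_ne_zero 2 h'))
      nlinarith [sq_nonneg b]
    · have h1 : 0 < b^2 := (sq_nonneg b).lt_of_ne (Ne.symm (pow_ne_zero 2 h'))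
      nlinarith [sq_nonneg a]
  obtain ⟨hpa, hpb, hpc⟩ := parity_abcd a b c d h
  by_cases hd2 : (2:ℤ) ∣ d
  · -- all even: descend
    obtain ⟨a', ha⟩ := hpa.mpr hd2
    obtain ⟨b', hb⟩ := hpb.mpr hd2
    obtain ⟨c', hc⟩ := hpc.mpr hd2
    obtain ⟨d', hd⟩ := hd2
    have h' : a'^2 + b'^2 + c'^2 = 3*d'^2 := by
      have h4 : (4:ℤ) * (a'^2 + b'^2 + c'^2) = 4 * (3*d'^2) := by
        rw [ha, hb, hc, hd] at h
        linear_combination h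
      exact mul_left_cancel₀ (by norm_num) h4
    have e4 : a^2 + b^2 = 4*(a'^2 + b'^2) := by rw [ha, hb]; ring
    have hpos' : 0 < a'^2 + b'^2 := by linarith
    have hlt : (a'^2 + b'^2).natAbs < n := by
      subst hn
      have h1 : ((a'^2+b'^2).natAbs : ℤ) = a'^2+b'^2 := Int.natAbs_of_nonneg hpos'.le
      have h2 : ((a^2+b^2).natAbs : ℤ) = a^2+b^2 := Int.natAbs_of_nonneg hpos.le
      have h3 : ((a'^2+b'^2).natAbs : ℤ) < ((a^2+b^2).natAbs : ℤ) := by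
        rw [h1, h2]; linarith
      exact_mod_cast h3
    obtain ⟨r, s, hrs⟩ := ih _ hlt a' b' c' d' rfl h'
    exact ⟨2*r, 2*s, by rw [ha, hb]; linear_combination 4*hrs⟩
  · -- all odd
    have hna2 : ¬ (2:ℤ) ∣ a := fun hh => hd2 (hpa.mp hh)
    have hnb2 : ¬ (2:ℤ) ∣ b := fun hh => hd2 (hpb.mp hh)
    set m : ℕ := (a^2 + b^2).natAbs with hmdef
    have hmcast : (m:ℤ) = a^2 + b^2 := Int.natAbs_of_nonneg hpos.le
    have hm0 : 0 < m := by
      have : (0:ℤ) < (m:ℤ) := by rw [hmcast]; exact hpos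
      exact_mod_cast this
    have hcond : ∀ q : ℕ, q.Prime → q % 3 = 2 → Even ((2*m).factorization q) := by
      intro q hq hq3
      rcases eq_or_ne q 2 with hq2 | hq2
      · -- q = 2
        subst hq2
        have hoa : Odd a := by
          rcases Int.even_or_odd a with he | ho
          · exact absurd (by obtain ⟨w, hw⟩ := he; exact ⟨w, by omega⟩) hna2
          · exact ho
        have hob : Odd b := by
          rcases Int.even_or_odd b with he | ho
          · exact absurd (by obtain ⟨w, hw⟩ := he; exact ⟨w, by omega⟩) hnb2
          · exact ho
        obtain ⟨i, hi⟩ := hoa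
        obtain ⟨j, hj⟩ := hob
        have hM : a^2 + b^2 = 2*(2*(i^2+i+j^2+j)+1) := by rw [hi, hj]; ring
        set M : ℤ := 2*(i^2+i+j^2+j)+1 with hMdef
        have hModd : Odd M := ⟨i^2+i+j^2+j, rfl⟩
        have hMnat : m = 2 * M.natAbs := by
          rw [hmdef, hM, Int.natAbs_mul]
          rfl
        have hMn0 : M.natAbs ≠ 0 := by
          intro h0
          have hM0 : M = 0 := Int.natAbs_eq_zero.mp h0
          rcases hModd with ⟨w, hw⟩
          omega
        have hnd : ¬ 2 ∣ M.natAbs := by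
          have hox : Odd M.natAbs := Int.natAbs_odd.mpr hModd
          rcases hox with ⟨w, hw⟩
          omega
        have hval : (2*m).factorization 2 = 2 := by
          rw [hMnat, ← mul_assoc,
            Nat.factorization_mul (by norm_num) hMn0, Finsupp.add_apply]
          have h40 : (Nat.factorization (2*2)) 2 = 2 := by
            rw [show (2*2 : ℕ) = 2^2 by norm_num, Nat.prime_two.factorization_pow,
              Finsupp.single_eq_same]
          have hMz : (Nat.factorization M.natAbs) 2 = 0 :=
            Nat.factorization_eq_zero_of_not_dvd hnd
          omega
        rw [hval]
        exact ⟨1, rfl⟩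
      · have hfq : (2*m).factorization q = m.factorization q := by
          rw [Nat.factorization_mul (by norm_num) hm0.ne', Finsupp.add_apply]
          have h20 : (Nat.factorization 2) q = 0 := Nat.factorization_eq_zero_of_not_dvd
            (fun hqd => hq2 ((Nat.prime_dvd_prime_iff_eq hq Nat.prime_two).mp hqd))
          rw [h20, zero_add]
        rw [hfq]
        by_contra hodd
        have hodd' : Odd (m.factorization q) := Nat.odd_iff.mpr (by
          rcases Nat.even_or_odd (m.factorization q) with he | ho
          · exact absurd he hodd
          · exact Nat.odd_iff.mp ho)
        have hsq1 : IsSquare (-1 : ZMod q) :=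
          isSquare_neg_one_of_odd_val q hq m a b hmcast.symm hm0 hodd'
        have hq3ne : q ≠ 3 := by omega
        have hsq3 : IsSquare (3 : ZMod q) :=
          isSquare_three_of_odd_val q hq hq3ne m c d (by linarith) hm0 hodd'
        have hsqm : IsSquare (-3 : ZMod q) := by
          have hmul := hsq1.mul hsq3
          rwa [neg_one_mul] at hmul
        have := mod_of_sq_neg_three q hq hq2 hq3ne hsqm
        omega
    have h2m0 : 0 < 2*m := by omega
    obtain ⟨u, v, huv⟩ := rep_of_even_factorization (2*m) h2m0 hcond
    refine ⟨v, u, ?_⟩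
    have hfin : ((2*m : ℕ) : ℤ) = 2*(a^2 + b^2) := by push_cast [hmcast]; ring
    rw [← hfin, huv]
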